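/- Let H = (V,E), U ⊆ V with every edge of E projecting onto U with size at most 2 and at least 1, and let s be an extra indeterminate. Define the Tutte matrix T^(s) with rows and columns indexed by U: T^(s)(i,j) = Σ_{e: e∩U = {i,j}, i≠j} v_e for i ≠ j, and T^(s)(i,i) = s·Σ_{e: e∩U = {i}} v_e. Then over a field of characteristic 2, det(T^(s)) = Σ_{M ∈ M} s^{Λ(M)} Π_{e∈M} v_e^{p(e)}, where M ranges over perfect matchings of the projected multigraph (loops allowed, a loop covering only its one vertex), Λ(M) is the number of loop edges in M, p(e) = 1 for loops and p(e) = 2 for non-loop edges. -/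

import Mathlib

open scoped Classical

namespace TutteAux

set_option linter.unusedSectionVars false

open Finset MvPolynomial Equiv

variable {ι : Type*} {m : ℕ}

noncomputable def TM (E : Finset ι) (proj : ι → Finset (Fin m)) (F : Type*) [Field F] :
    Matrix (Fin m) (Fin m) (MvPolynomial (Option ι) F) := fun i j =>
  if i = j then
    (X none : MvPolynomial (Option ι) F) *
      ∑ e ∈ E.filter (fun e => proj e = {i}), X (some e)
  else
    ∑ e ∈ E.filter (fun e => proj e = {i, j}), (X (some e) : MvPolynomial (Option ι) F)

variable (E : Finset ι) (proj : ι → Finset (Fin m)) (F : Type*) [Field F] [CharP F 2]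

lemma pair_left_inj {α : Type*} {a b x : α} (h : ({a, x} : Finset α) = {b, x}) : a = b := by
  classical
  by_cases hax : a = x
  · have hb : b ∈ ({a, x} : Finset α) := by rw [h]; exact mem_insert_self _ _
    rcases mem_insert.mp hb with h2 | h2
    · exact h2.symm
    · rw [hax, mem_singleton.mp h2]
  · have ha : a ∈ ({b, x} : Finset α) := by rw [← h]; exact mem_insert_self _ _
    rcases mem_insert.mp ha with h1 | h1
    · exact h1
    · exact absurd (mem_singleton.mp h1) hax

lemma TM_symm (i j : Fin m) : TM E proj F i j = TM E proj F j i := by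
  unfold TM
  by_cases h : i = j
  · subst h; simp
  · rw [if_neg h, if_neg (Ne.symm h), Finset.pair_comm]

lemma prod_inv_eq (σ : Perm (Fin m)) :
    ∏ i, TM E proj F (σ⁻¹ i) i = ∏ i, TM E proj F (σ i) i := by
  have h1 : ∏ i, TM E proj F (σ⁻¹ i) i = ∏ i, TM E proj F (σ⁻¹ (σ i)) (σ i) :=
    (Equiv.prod_comp σ (fun i => TM E proj F (σ⁻¹ i) i)).symm
  simp only [show ∀ x, σ⁻¹ (σ x) = x from fun x => σ.symm_apply_apply x] at h1
  rw [h1]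
  exact Finset.prod_congr rfl fun i _ => TM_symm E proj F i (σ i)

lemma det_eq_sum_invols :
    (TM E proj F).det =
      ∑ σ ∈ (univ : Finset (Perm (Fin m))).filter (fun σ => σ⁻¹ = σ),
        ∏ i, TM E proj F (σ i) i := by
  rw [Matrix.det_apply]
  have hsmul : ∀ (u : ℤˣ) (x : MvPolynomial (Option ι) F), u • x = x := by
    intro u x
    rcases Int.units_eq_one_or u with h | h <;> subst h <;>
      simp [Units.smul_def, CharTwo.neg_eq]
  simp only [hsmul]
  rw [← Finset.sum_filter_add_sum_filter_not (univ : Finset (Perm (Fin m)))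
    (fun σ => σ⁻¹ = σ)]
  have hz : ∑ σ ∈ (univ : Finset (Perm (Fin m))).filter (fun σ => ¬ σ⁻¹ = σ),
      ∏ i, TM E proj F (σ i) i = 0 := by
    apply Finset.sum_involution (fun σ _ => σ⁻¹)
    · intro σ hσ
      rw [prod_inv_eq]
      exact CharTwo.add_self_eq_zero _
    · intro σ hσ _
      exact (Finset.mem_filter.mp hσ).2
    · intro σ _
      simp
    · intro σ hσ
      have h1 := (Finset.mem_filter.mp hσ).2
      simp only [Finset.mem_filter, Finset.mem_univ, true_and, inv_inv]
      intro hEq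
      exact h1 hEq.symm
  rw [hz, add_zero]

lemma prod_invol (σ : Perm (Fin m)) (hσ : ∀ x, σ (σ x) = x) :
    ∏ i, TM E proj F (σ i) i =
      (X none : MvPolynomial (Option ι) F) ^ (univ.filter (fun i => σ i = i)).card *
        ∏ i ∈ univ.filter (fun i => i ≤ σ i),
          ∑ e ∈ E.filter (fun e => proj e = {σ i, i}),
            (X (some e) : MvPolynomial (Option ι) F) ^ (if σ i = i then 1 else 2) := by
  classical
  have hfilfix : ∀ (p : Fin m → Prop),
      (univ.filter (fun i => i ≤ σ i)).filter (fun i => σ i = i)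
        = univ.filter (fun i => σ i = i) := by
    intro _
    ext i
    simp only [Finset.filter_filter, Finset.mem_filter, Finset.mem_univ, true_and]
    exact ⟨fun h => h.2, fun h => ⟨le_of_eq h.symm, h⟩⟩
  have hfilpair :
      (univ.filter (fun i => i ≤ σ i)).filter (fun i => ¬ σ i = i)
        = univ.filter (fun i => i < σ i) := by
    ext i
    simp only [Finset.filter_filter, Finset.mem_filter, Finset.mem_univ, true_and]
    constructor
    · rintro ⟨h1, h2⟩
      exact lt_of_le_of_ne h1 (fun h => h2 h.symm)
    · intro h
      exact ⟨le_of_lt h, fun h2 => absurd h (by rw [h2]; exact lt_irrefl i)⟩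
  have hDsplit : ∀ (f : Fin m → MvPolynomial (Option ι) F),
      ∏ i ∈ univ.filter (fun i => i ≤ σ i), f i
        = (∏ i ∈ univ.filter (fun i => σ i = i), f i) *
            ∏ i ∈ univ.filter (fun i => i < σ i), f i := by
    intro f
    rw [← Finset.prod_filter_mul_prod_filter_not (univ.filter (fun i => i ≤ σ i))
      (fun i => σ i = i), hfilfix (fun i => σ i = i), hfilpair]
  -- split the full product
  rw [← Finset.prod_filter_mul_prod_filter_not univ (fun i => i ≤ σ i)
    (fun i => TM E proj F (σ i) i)]
  have h2 : ∏ i ∈ univ.filter (fun i => ¬ i ≤ σ i), TM E proj F (σ i) i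
      = ∏ i ∈ univ.filter (fun i => i < σ i), TM E proj F (σ i) i := by
    apply Finset.prod_nbij' (fun a => σ a) (fun a => σ a)
    · intro a ha
      simp only [Finset.mem_filter, Finset.mem_univ, true_and, not_le] at ha ⊢
      rw [hσ a]
      exact ha
    · intro a ha
      simp only [Finset.mem_filter, Finset.mem_univ, true_and, not_le] at ha ⊢
      rw [hσ a]
      exact ha
    · intro a _; exact hσ a
    · intro a _; exact hσ a
    · intro a _
      rw [hσ a]
      exact TM_symm E proj F (σ a) a
  rw [h2, hDsplit (fun i => TM E proj F (σ i) i), hDsplit]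
  have hfix : ∏ i ∈ univ.filter (fun i => σ i = i), TM E proj F (σ i) i
      = (X none : MvPolynomial (Option ι) F) ^ (univ.filter (fun i => σ i = i)).card *
        ∏ i ∈ univ.filter (fun i => σ i = i),
          ∑ e ∈ E.filter (fun e => proj e = {σ i, i}),
            (X (some e) : MvPolynomial (Option ι) F) ^ (if σ i = i then 1 else 2) := by
    rw [← Finset.prod_const, ← Finset.prod_mul_distrib]
    apply Finset.prod_congr rfl
    intro i hi
    have hfix_i : σ i = i := by simpa using (Finset.mem_filter.mp hi).2
    unfold TM
    rw [hfix_i, if_pos rfl, if_pos rfl, Finset.pair_eq_singleton]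
    simp
  have hpair : (∏ i ∈ univ.filter (fun i => i < σ i), TM E proj F (σ i) i) *
        ∏ i ∈ univ.filter (fun i => i < σ i), TM E proj F (σ i) i
      = ∏ i ∈ univ.filter (fun i => i < σ i),
          ∑ e ∈ E.filter (fun e => proj e = {σ i, i}),
            (X (some e) : MvPolynomial (Option ι) F) ^ (if σ i = i then 1 else 2) := by
    rw [← Finset.prod_mul_distrib]
    apply Finset.prod_congr rfl
    intro i hi
    have hlt : i < σ i := by simpa using (Finset.mem_filter.mp hi).2
    have hne : ¬ σ i = i := fun h => absurd hlt (by rw [h]; exact lt_irrefl i)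
    rw [if_neg hne]
    unfold TM
    rw [if_neg (fun h => hne h)]
    rw [← sq, CharTwo.sum_sq]
  rw [mul_assoc, hpair, hfix, mul_assoc]

lemma fiber_sum (hproj : ∀ e ∈ E, 1 ≤ (proj e).card ∧ (proj e).card ≤ 2)
    (σ : Perm (Fin m)) (hσ : ∀ x, σ (σ x) = x) :
    (X none : MvPolynomial (Option ι) F) ^ (univ.filter (fun i => σ i = i)).card *
        ∏ i ∈ univ.filter (fun i => i ≤ σ i),
          ∑ e ∈ E.filter (fun e => proj e = {σ i, i}),
            (X (some e) : MvPolynomial (Option ι) F) ^ (if σ i = i then 1 else 2)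
      = ∑ M ∈ (E.powerset.filter (fun M =>
            ∀ x : Fin m, (M.filter (fun e => x ∈ proj e)).card = 1)).filter
            (fun M => ∀ e ∈ M, ∀ x ∈ proj e, proj e = {σ x, x}),
          (X none : MvPolynomial (Option ι) F)
              ^ ((M.filter fun e => (proj e).card = 1).card) *
            ∏ e ∈ M, (X (some e) : MvPolynomial (Option ι) F)
              ^ (if (proj e).card = 1 then 1 else 2) := by
  classical
  have hx_pair : ∀ (i x : Fin m), x ∈ ({σ i, i} : Finset (Fin m)) ↔ x = σ i ∨ x = i := by
    intro i x; simp [Finset.mem_insert, Finset.mem_singleton]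
  have hmem_pair : ∀ (i x : Fin m), (x = i ∨ x = σ i) → x ∈ ({σ i, i} : Finset (Fin m)) := by
    intro i x h; rcases h with rfl | rfl
    · exact Finset.mem_insert_of_mem (Finset.mem_singleton_self x)
    · exact Finset.mem_insert_self _ _
  have hpairx : ∀ (i x : Fin m), (x = i ∨ x = σ i) →
      ({σ i, i} : Finset (Fin m)) = {σ x, x} := by
    intro i x h; rcases h with rfl | rfl
    · rfl
    · rw [hσ i]; exact Finset.pair_comm _ _
  have huniq : ∀ i j : Fin m, i ≤ σ i → j ≤ σ j →
      ({σ i, i} : Finset (Fin m)) = {σ j, j} → i = j := by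
    intro i j hi hj h
    have : i ∈ ({σ j, j} : Finset (Fin m)) := by
      rw [← h]; exact Finset.mem_insert_of_mem (Finset.mem_singleton_self i)
    rcases (hx_pair j i).mp this with h1 | h1
    · have h2 : σ i = j := by rw [h1, hσ]
      exact le_antisymm (h2 ▸ hi) (h1 ▸ hj)
    · exact h1
  have huniq2 : ∀ (i j x : Fin m), i ≤ σ i → j ≤ σ j →
      (x = i ∨ x = σ i) → (x = j ∨ x = σ j) → i = j := fun i j x hi hj h1 h2 =>
    huniq i j hi hj ((hpairx i x h1).trans (hpairx j x h2).symm)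
  have hrep : ∀ x : Fin m, ∃ i, i ≤ σ i ∧ (x = i ∨ x = σ i) := by
    intro x
    by_cases h : x ≤ σ x
    · exact ⟨x, h, Or.inl rfl⟩
    · refine ⟨σ x, ?_, Or.inr (hσ x).symm⟩
      rw [hσ]; exact le_of_not_ge h
  have hcardpair : ∀ i : Fin m, ({σ i, i} : Finset (Fin m)).card
      = if σ i = i then 1 else 2 := by
    intro i
    by_cases h : σ i = i
    · rw [if_pos h, h, Finset.pair_eq_singleton, Finset.card_singleton]
    · rw [if_neg h, Finset.card_pair h]
  rw [Finset.prod_sum, Finset.mul_sum]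
  set D : Finset (Fin m) := univ.filter (fun i => i ≤ σ i) with hD
  have hDmem : ∀ i : Fin m, i ∈ D ↔ i ≤ σ i := by
    intro i; rw [hD]; simp
  apply Finset.sum_bij (fun g _ => D.attach.image (fun a => g a.1 a.2))
  · -- maps into target
    intro g hg
    have hgE : ∀ (i : Fin m) (hi : i ∈ D), g i hi ∈ E := by
      intro i hi
      have := Finset.mem_pi.mp hg i hi
      exact (Finset.mem_filter.mp this).1
    have hgproj : ∀ (i : Fin m) (hi : i ∈ D), proj (g i hi) = {σ i, i} := by
      intro i hi
      have := Finset.mem_pi.mp hg i hi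
      exact (Finset.mem_filter.mp this).2
    rw [Finset.mem_filter, Finset.mem_filter, Finset.mem_powerset]
    refine ⟨⟨?_, ?_⟩, ?_⟩
    · intro e he
      rcases Finset.mem_image.mp he with ⟨a, _, rfl⟩
      exact hgE a.1 a.2
    · intro x
      obtain ⟨r, hrle, hrx⟩ := hrep x
      have hrD : r ∈ D := (hDmem r).mpr hrle
      have : (D.attach.image (fun a => g a.1 a.2)).filter (fun e => x ∈ proj e)
          = {g r hrD} := by
        ext e
        simp only [Finset.mem_filter, Finset.mem_singleton]
        constructor
        · rintro ⟨he, hx⟩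
          rcases Finset.mem_image.mp he with ⟨⟨i, hi⟩, -, rfl⟩
          rw [hgproj i hi] at hx
          have hir : i = r := by
            refine huniq2 i r x ((hDmem i).mp hi) hrle ?_ hrx
            rcases (hx_pair i x).mp hx with h | h
            · exact Or.inr h
            · exact Or.inl h
          subst hir
          rfl
        · rintro rfl
          refine ⟨Finset.mem_image.mpr ⟨⟨r, hrD⟩, Finset.mem_attach _ _, rfl⟩, ?_⟩
          rw [hgproj r hrD]
          exact hmem_pair r x hrx
      rw [this, Finset.card_singleton]
    · intro e he x hx
      rcases Finset.mem_image.mp he with ⟨⟨i, hi⟩, -, rfl⟩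
      rw [hgproj i hi] at hx ⊢
      refine hpairx i x ?_
      rcases (hx_pair i x).mp hx with h | h
      · exact Or.inr h
      · exact Or.inl h
  · -- injectivity
    intro g1 hg1 g2 hg2 himg
    have hgproj : ∀ (g : (a : Fin m) → a ∈ D → ι), g ∈ D.pi (fun i =>
        E.filter (fun e => proj e = {σ i, i})) →
        ∀ (i : Fin m) (hi : i ∈ D), proj (g i hi) = {σ i, i} := by
      intro g hg i hi
      exact (Finset.mem_filter.mp (Finset.mem_pi.mp hg i hi)).2
    funext i hi
    have h1 : g1 i hi ∈ D.attach.image (fun a => g2 a.1 a.2) := by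
      rw [← himg]
      exact Finset.mem_image.mpr ⟨⟨i, hi⟩, Finset.mem_attach _ _, rfl⟩
    rcases Finset.mem_image.mp h1 with ⟨⟨j, hj⟩, -, hji⟩
    have hproj_eq : ({σ j, j} : Finset (Fin m)) = {σ i, i} := by
      rw [← hgproj g1 hg1 i hi, ← hgproj g2 hg2 j hj, hji]
    have : j = i := huniq j i ((hDmem j).mp hj) ((hDmem i).mp hi) hproj_eq
    subst this
    exact hji.symm
  · -- surjectivity
    intro M hM
    rw [Finset.mem_filter, Finset.mem_filter, Finset.mem_powerset] at hM
    obtain ⟨⟨hME, hM1⟩, hMcond⟩ := hM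
    have hsel : ∀ x : Fin m, ∃ e, M.filter (fun e => x ∈ proj e) = {e} :=
      fun x => Finset.card_eq_one.mp (hM1 x)
    have hselM : ∀ x : Fin m, (hsel x).choose ∈ M ∧ x ∈ proj (hsel x).choose := by
      intro x
      have : (hsel x).choose ∈ M.filter (fun e => x ∈ proj e) := by
        have h0 : (hsel x).choose ∈ ({(hsel x).choose} : Finset ι) :=
          Finset.mem_singleton_self _
        rw [← (hsel x).choose_spec] at h0
        exact h0
      exact ⟨(Finset.mem_filter.mp this).1, (Finset.mem_filter.mp this).2⟩
    refine ⟨fun i _ => (hsel i).choose, ?_, ?_⟩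
    · rw [Finset.mem_pi]
      intro i hi
      rw [Finset.mem_filter]
      exact ⟨hME (hselM i).1, hMcond _ (hselM i).1 i (hselM i).2⟩
    · ext e
      constructor
      · intro he
        rcases Finset.mem_image.mp he with ⟨⟨i, hi⟩, -, rfl⟩
        exact (hselM i).1
      · intro he
        have hcard : 1 ≤ (proj e).card := (hproj e (hME he)).1
        obtain ⟨x, hx⟩ := Finset.card_pos.mp hcard
        obtain ⟨r, hrle, hrx⟩ := hrep x
        have hrD : r ∈ D := (hDmem r).mpr hrle
        have hre : r ∈ proj e := by
          rw [hMcond e he x hx]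
          rcases hrx with rfl | h
          · exact Finset.mem_insert_of_mem (Finset.mem_singleton_self _)
          · have hsx : σ x = r := by rw [h, hσ]
            rw [← hsx]
            exact Finset.mem_insert_self _ _
        have h1 : e ∈ M.filter (fun e => r ∈ proj e) := Finset.mem_filter.mpr ⟨he, hre⟩
        rw [(hsel r).choose_spec] at h1
        rw [Finset.mem_singleton] at h1
        exact Finset.mem_image.mpr ⟨⟨r, hrD⟩, Finset.mem_attach _ _, h1.symm⟩
  · -- value equality
    intro g hg
    have hgE : ∀ (i : Fin m) (hi : i ∈ D), g i hi ∈ E :=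
      fun i hi => (Finset.mem_filter.mp (Finset.mem_pi.mp hg i hi)).1
    have hgproj : ∀ (i : Fin m) (hi : i ∈ D), proj (g i hi) = {σ i, i} :=
      fun i hi => (Finset.mem_filter.mp (Finset.mem_pi.mp hg i hi)).2
    have hinj : ∀ a ∈ D.attach, ∀ b ∈ D.attach,
        g a.1 a.2 = g b.1 b.2 → a = b := by
      rintro ⟨i, hi⟩ - ⟨j, hj⟩ - hab
      have : ({σ i, i} : Finset (Fin m)) = {σ j, j} := by
        rw [← hgproj i hi, ← hgproj j hj, hab]
      have := huniq i j ((hDmem i).mp hi) ((hDmem j).mp hj) this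
      exact Subtype.ext this
    congr 1
    · -- powers of X none
      congr 1
      rw [Finset.filter_image]
      rw [Finset.card_image_of_injOn (fun a ha b hb hab => hinj a
        (Finset.mem_attach _ _) b (Finset.mem_attach _ _) hab)]
      symm
      apply Finset.card_bij (fun (a : {x // x ∈ D}) _ => a.1)
      · rintro ⟨i, hi⟩ ha
        simp only [Finset.mem_filter, Finset.mem_attach, true_and, Function.comp] at ha
        rw [hgproj i hi, hcardpair i] at ha
        simp only [Finset.mem_filter, Finset.mem_univ, true_and]
        by_contra hne
        rw [if_neg hne] at ha
        exact (by norm_num : (2 : ℕ) ≠ 1) ha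
      · rintro ⟨i, hi⟩ - ⟨j, hj⟩ - h
        exact Subtype.ext h
      · intro i hi
        simp only [Finset.mem_filter, Finset.mem_univ, true_and] at hi
        have hiD : i ∈ D := (hDmem i).mpr (le_of_eq hi.symm)
        refine ⟨⟨i, hiD⟩, ?_, rfl⟩
        simp only [Finset.mem_filter, Finset.mem_attach, true_and, Function.comp]
        rw [hgproj i hiD, hcardpair i, if_pos hi]
    · -- products
      rw [Finset.prod_image hinj]
      apply Finset.prod_congr rfl
      rintro ⟨i, hi⟩ -
      congr 1
      rw [hgproj i hi, hcardpair i]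
      by_cases h : σ i = i
      · rw [if_pos h, if_pos rfl]
      · rw [if_neg h, if_neg (by norm_num)]

lemma exists_invol (hproj : ∀ e ∈ E, 1 ≤ (proj e).card ∧ (proj e).card ≤ 2)
    (M : Finset ι) (hME : M ⊆ E)
    (hM1 : ∀ x : Fin m, (M.filter (fun e => x ∈ proj e)).card = 1) :
    ∃ σ : Perm (Fin m), σ⁻¹ = σ ∧ ∀ e ∈ M, ∀ x ∈ proj e, proj e = {σ x, x} := by
  classical
  have hsel : ∀ x : Fin m, ∃ e, M.filter (fun e => x ∈ proj e) = {e} :=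
    fun x => Finset.card_eq_one.mp (hM1 x)
  set eM : Fin m → ι := fun x => (hsel x).choose with heM
  have hselM : ∀ x : Fin m, eM x ∈ M ∧ x ∈ proj (eM x) := by
    intro x
    have h0 : eM x ∈ ({eM x} : Finset ι) := Finset.mem_singleton_self _
    rw [← (hsel x).choose_spec] at h0
    exact ⟨(Finset.mem_filter.mp h0).1, (Finset.mem_filter.mp h0).2⟩
  have huniqe : ∀ (x : Fin m) (e : ι), e ∈ M → x ∈ proj e → e = eM x := by
    intro x e he hx
    have h1 : e ∈ M.filter (fun e => x ∈ proj e) := Finset.mem_filter.mpr ⟨he, hx⟩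
    rw [(hsel x).choose_spec] at h1
    exact Finset.mem_singleton.mp h1
  set t : Fin m → Fin m := fun x =>
    if h : ((proj (eM x)).erase x).Nonempty then ((proj (eM x)).erase x).min' h else x
    with ht
  have claimA : ∀ x : Fin m, proj (eM x) = {t x, x} := by
    intro x
    obtain ⟨h1, h2⟩ := hproj (eM x) (hME (hselM x).1)
    interval_cases hc : (proj (eM x)).card
    · -- card = 1
      obtain ⟨a, ha⟩ := Finset.card_eq_one.mp hc
      have hax : a = x := by
        have := (hselM x).2
        rw [ha] at this
        exact (Finset.mem_singleton.mp this).symm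
      subst hax
      have hempty : ¬ ((proj (eM a)).erase a).Nonempty := by
        rw [ha]
        simp
      rw [ht]
      simp only [dif_neg hempty]
      rw [ha, Finset.pair_eq_singleton]
    · -- card = 2
      obtain ⟨a, b, hab, hpr⟩ := Finset.card_eq_two.mp hc
      have hx : x = a ∨ x = b := by
        have := (hselM x).2
        rw [hpr] at this
        rcases Finset.mem_insert.mp this with h | h
        · exact Or.inl h
        · exact Or.inr (Finset.mem_singleton.mp h)
      rcases hx with rfl | rfl
      · have herase : (proj (eM x)).erase x = {b} := by
          rw [hpr, Finset.erase_insert (by simpa using hab)]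
        have hne : ((proj (eM x)).erase x).Nonempty := by
          rw [herase]; exact Finset.singleton_nonempty _
        have hallb : ∀ y ∈ (proj (eM x)).erase x, y = b := by
          rw [herase]
          intro y hy
          exact Finset.mem_singleton.mp hy
        have htx : t x = b := by
          rw [ht]
          simp only [dif_pos hne]
          exact hallb _ (Finset.min'_mem _ hne)
        rw [htx, hpr, Finset.pair_comm]
      · have herase : (proj (eM x)).erase x = {a} := by
          rw [hpr, Finset.pair_comm, Finset.erase_insert (by simpa using hab.symm)]
        have hne : ((proj (eM x)).erase x).Nonempty := by
          rw [herase]; exact Finset.singleton_nonempty _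
        have hallb : ∀ y ∈ (proj (eM x)).erase x, y = a := by
          rw [herase]
          intro y hy
          exact Finset.mem_singleton.mp hy
        have htx : t x = a := by
          rw [ht]
          simp only [dif_pos hne]
          exact hallb _ (Finset.min'_mem _ hne)
        rw [htx, hpr]
  have claimB : Function.Involutive t := by
    intro x
    by_cases hyx : t x = x
    · rw [hyx, hyx]
    · have hy : t x ∈ proj (eM x) := by
        rw [claimA x]; exact Finset.mem_insert_self _ _
      have he : eM x = eM (t x) := huniqe (t x) (eM x) (hselM x).1 hy
      have h2 : ({t x, x} : Finset (Fin m)) = {t (t x), t x} := by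
        rw [← claimA x, he, claimA (t x)]
      have hxmem : x ∈ ({t (t x), t x} : Finset (Fin m)) := by
        rw [← h2]; exact Finset.mem_insert_of_mem (Finset.mem_singleton_self _)
      rcases Finset.mem_insert.mp hxmem with h | h
      · exact h.symm
      · exact absurd (Finset.mem_singleton.mp h).symm hyx
  refine ⟨Function.Involutive.toPerm t claimB, ?_, ?_⟩
  · rfl
  · intro e he x hx
    rw [huniqe x e he hx]
    exact claimA x

lemma invol_unique (M : Finset ι)
    (hM1 : ∀ x : Fin m, (M.filter (fun e => x ∈ proj e)).card = 1)
    (σ τ : Perm (Fin m))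
    (hs : ∀ e ∈ M, ∀ x ∈ proj e, proj e = {σ x, x})
    (ht : ∀ e ∈ M, ∀ x ∈ proj e, proj e = {τ x, x}) : σ = τ := by
  apply Equiv.ext
  intro x
  have hpos : 0 < (M.filter (fun e => x ∈ proj e)).card := by rw [hM1 x]; norm_num
  obtain ⟨e, he⟩ := Finset.card_pos.mp hpos
  obtain ⟨heM, hx⟩ := Finset.mem_filter.mp he
  have h1 : σ x ∈ proj e := by
    rw [hs e heM x hx]; exact Finset.mem_insert_self _ _
  rw [ht e heM x hx] at h1
  rcases Finset.mem_insert.mp h1 with h | h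
  · exact h
  · have hsx : σ x = x := Finset.mem_singleton.mp h
    have h2 : τ x ∈ proj e := by
      rw [ht e heM x hx]; exact Finset.mem_insert_self _ _
    rw [hs e heM x hx] at h2
    rcases Finset.mem_insert.mp h2 with h3 | h3
    · exact h3.symm
    · exact hsx.trans (Finset.mem_singleton.mp h3).symm

noncomputable def sigmaOf (proj : ι → Finset (Fin m)) (M : Finset ι) : Perm (Fin m) :=
  if h : ∃ σ : Perm (Fin m), σ⁻¹ = σ ∧ ∀ e ∈ M, ∀ x ∈ proj e, proj e = {σ x, x} then
    h.choose
  else 1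

theorem main (hproj : ∀ e ∈ E, 1 ≤ (proj e).card ∧ (proj e).card ≤ 2) :
    (TM E proj F).det
      = ∑ M ∈ E.powerset.filter (fun M =>
            ∀ x : Fin m, (M.filter (fun e => x ∈ proj e)).card = 1),
          (X none : MvPolynomial (Option ι) F)
              ^ ((M.filter fun e => (proj e).card = 1).card) *
            ∏ e ∈ M, (X (some e) : MvPolynomial (Option ι) F)
              ^ (if (proj e).card = 1 then 1 else 2) := by
  classical
  rw [det_eq_sum_invols]
  have step1 : ∀ σ ∈ (univ : Finset (Perm (Fin m))).filter (fun σ => σ⁻¹ = σ),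
      ∏ i, TM E proj F (σ i) i
        = ∑ M ∈ (E.powerset.filter (fun M =>
              ∀ x : Fin m, (M.filter (fun e => x ∈ proj e)).card = 1)).filter
              (fun M => sigmaOf proj M = σ),
            (X none : MvPolynomial (Option ι) F)
                ^ ((M.filter fun e => (proj e).card = 1).card) *
              ∏ e ∈ M, (X (some e) : MvPolynomial (Option ι) F)
                ^ (if (proj e).card = 1 then 1 else 2) := by
    intro σ hσmem
    have hσinv : σ⁻¹ = σ := (Finset.mem_filter.mp hσmem).2
    have hσ : ∀ x, σ (σ x) = x := by
      intro x
      calc σ (σ x) = σ⁻¹ (σ x) := by rw [hσinv]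
        _ = x := σ.symm_apply_apply x
    rw [prod_invol E proj F σ hσ, fiber_sum E proj F hproj σ hσ]
    have hset : (E.powerset.filter (fun M =>
            ∀ x : Fin m, (M.filter (fun e => x ∈ proj e)).card = 1)).filter
            (fun M => ∀ e ∈ M, ∀ x ∈ proj e, proj e = {σ x, x})
        = (E.powerset.filter (fun M =>
            ∀ x : Fin m, (M.filter (fun e => x ∈ proj e)).card = 1)).filter
            (fun M => sigmaOf proj M = σ) := by
      ext M
      simp only [Finset.mem_filter, Finset.mem_powerset]
      constructor
      · rintro ⟨⟨hME, hM1⟩, hcond⟩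
        refine ⟨⟨hME, hM1⟩, ?_⟩
        have hex : ∃ τ : Perm (Fin m), τ⁻¹ = τ ∧
            ∀ e ∈ M, ∀ x ∈ proj e, proj e = {τ x, x} := ⟨σ, hσinv, hcond⟩
        rw [sigmaOf, dif_pos hex]
        exact invol_unique proj M hM1 hex.choose σ hex.choose_spec.2 hcond
      · rintro ⟨⟨hME, hM1⟩, hcond⟩
        refine ⟨⟨hME, hM1⟩, ?_⟩
        have hex := exists_invol E proj hproj M hME hM1
        rw [sigmaOf, dif_pos hex] at hcond
        rw [← hcond]
        exact hex.choose_spec.2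
    rw [hset]
  rw [Finset.sum_congr rfl step1]
  apply Finset.sum_fiberwise_of_maps_to
  intro M hM
  rw [Finset.mem_filter, Finset.mem_powerset] at hM
  obtain ⟨hME, hM1⟩ := hM
  have hex := exists_invol E proj hproj M hME hM1
  rw [Finset.mem_filter]
  refine ⟨Finset.mem_univ _, ?_⟩
  rw [sigmaOf, dif_pos hex]
  exact hex.choose_spec.1

end TutteAux

/-- Tutte-like matrix for the projected multigraph, over a field of
characteristic 2.  The vertex set `U` is identified with `Fin m`, `E` is a
finite set of edge indices and `proj e` is the projection of edge `e` onto `U`,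
of size 1 (a loop) or 2.  We work in the multivariate polynomial ring over a
field `F` of characteristic 2 with one indeterminate `v_e = X (some e)` per
edge and an extra indeterminate `s = X none`.  The Tutte matrix of index `s`
has off-diagonal entry `(i,j)` the sum of `v_e` over edges with
`proj e = {i,j}`, and diagonal entry `(i,i)` equal to `s` times the sum of
`v_e` over loops at `i`.  Its determinant equals
`∑_M s^{Λ(M)} ∏_{e ∈ M} v_e^{p e}`, the sum over all perfect matchings `M`
(loops allowed) of the projected multigraph, where `Λ(M)` is the number of
loops of `M`, and `p e = 1` for loops, `p e = 2` otherwise. -/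
theorem tutte_matrix_det_eq_sum_matchings_with_loops
    {ι : Type*} {m : ℕ} (E : Finset ι) (proj : ι → Finset (Fin m))
    (hproj : ∀ e ∈ E, 1 ≤ (proj e).card ∧ (proj e).card ≤ 2)
    (F : Type*) [Field F] [CharP F 2] :
    (Matrix.det (fun i j : Fin m =>
        if i = j then
          (MvPolynomial.X none : MvPolynomial (Option ι) F) *
            ∑ e ∈ E.filter (fun e => proj e = {i}), MvPolynomial.X (some e)
        else
          ∑ e ∈ E.filter (fun e => proj e = {i, j}),
            (MvPolynomial.X (some e) : MvPolynomial (Option ι) F)))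
      = ∑ M ∈ E.powerset.filter (fun M =>
            ∀ x : Fin m, (M.filter (fun e => x ∈ proj e)).card = 1),
          (MvPolynomial.X none : MvPolynomial (Option ι) F)
              ^ ((M.filter fun e => (proj e).card = 1).card) *
            ∏ e ∈ M, (MvPolynomial.X (some e) : MvPolynomial (Option ι) F)
              ^ (if (proj e).card = 1 then 1 else 2) := by
  exact TutteAux.main E proj F hproj
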